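/- Let Λ be a compact metric space, T : Λ → Λ continuous, and let φ_m : Λ → ℝ be a subadditive sequence of continuous functions (φ_{m+n} ≤ φ_m + φ_n ∘ T^m). For each ergodic T-invariant probability measure μ, let χ(μ) = lim_m (1/m) ∫ φ_m dμ (which exists by subadditivity). Suppose additionally that the entropy map μ ↦ h_μ(T) is upper semicontinuous. Then lim_{m→∞} sup_μ (1/m)(m·h_μ(T) + ∫φ_m dμ) ≤ sup_μ (h_μ(T) + χ(μ)), where suprema are over T-invariant Borel probability measures μ on Λ. -/

import Mathlib

open MeasureTheory

open Filter Topology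
open scoped ENNReal NNReal
set_option maxHeartbeats 1000000
set_option linter.unusedSectionVars false
set_option linter.unusedVariables false

section Helpers
variable {X : Type*} [MetricSpace X] [CompactSpace X]
    [MeasurableSpace X] [BorelSpace X]

lemma cont_integrable (f : C(X, ℝ)) (μ : Measure X) [IsFiniteMeasure μ] :
    Integrable f μ :=
  f.continuous.integrable_of_hasCompactSupport ((isClosed_tsupport _).isCompact)

end Helpers

section Riesz
variable {X : Type*} [MetricSpace X] [CompactSpace X] [Nonempty X]
    [MeasurableSpace X] [BorelSpace X]
variable (L : C(X, ℝ) → ℝ)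

/-- competitor functions for a compact set -/
def Fset (K : Set X) : Set C(X, ℝ) := {f | (∀ x, 0 ≤ f x) ∧ ∀ x ∈ K, 1 ≤ f x}

noncomputable def lam0 (K : Set X) : ℝ := sInf (L '' Fset K)

variable (Ladd : ∀ f g, L (f + g) = L f + L g)
    (Lpos : ∀ f : C(X, ℝ), (∀ x, 0 ≤ f x) → 0 ≤ L f)
    (Lone : L 1 = 1)
    (Lsmul : ∀ (c : ℝ) (f : C(X, ℝ)), L (c • f) = c * L f)

section
include Ladd Lpos

lemma Lmono {f g : C(X, ℝ)} (h : ∀ x, f x ≤ g x) : L f ≤ L g := by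
  have hg : g = f + (g - f) := by ring
  rw [hg, Ladd]
  have := Lpos (g - f) (fun x => by simpa using sub_nonneg.mpr (h x))
  linarith

lemma one_mem_Fset (K : Set X) : (1 : C(X, ℝ)) ∈ Fset K :=
  ⟨fun x => by norm_num, fun x _ => by norm_num⟩

lemma Fset_nonempty (K : Set X) : (L '' Fset K).Nonempty :=
  ⟨L 1, 1, one_mem_Fset L Ladd Lpos K, rfl⟩

lemma Fset_bddBelow (K : Set X) : BddBelow (L '' Fset K) :=
  ⟨0, fun y ⟨f, hf, hfy⟩ => hfy ▸ Lpos f hf.1⟩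

include Lone in
lemma lam0_le_one (K : Set X) : lam0 L K ≤ 1 := by
  have := csInf_le (Fset_bddBelow L Ladd Lpos K) ⟨1, one_mem_Fset L Ladd Lpos K, rfl⟩
  rwa [Lone] at this

lemma lam0_nonneg (K : Set X) : 0 ≤ lam0 L K :=
  le_csInf (Fset_nonempty L Ladd Lpos K) (fun y ⟨f, hf, hfy⟩ => hfy ▸ Lpos f hf.1)

lemma lam0_le {K : Set X} {f : C(X, ℝ)} (hf : f ∈ Fset K) : lam0 L K ≤ L f :=
  csInf_le (Fset_bddBelow L Ladd Lpos K) ⟨f, hf, rfl⟩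

lemma le_lam0 {K : Set X} {c : ℝ} (h : ∀ f ∈ Fset K, c ≤ L f) : c ≤ lam0 L K :=
  le_csInf (Fset_nonempty L Ladd Lpos K) (fun y ⟨f, hf, hfy⟩ => hfy ▸ h f hf)

lemma lam0_mono {K₁ K₂ : Set X} (h : K₁ ⊆ K₂) : lam0 L K₁ ≤ lam0 L K₂ :=
  le_lam0 L Ladd Lpos (fun f hf => lam0_le L Ladd Lpos ⟨hf.1, fun x hx => hf.2 x (h hx)⟩)

lemma lam0_union_le (K₁ K₂ : Set X) :
    lam0 L (K₁ ∪ K₂) ≤ lam0 L K₁ + lam0 L K₂ := by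
  refine le_of_forall_pos_le_add fun ε hε => ?_
  obtain ⟨y₁, ⟨f₁, hf₁, rfl⟩, hy₁⟩ := (csInf_lt_iff (Fset_bddBelow L Ladd Lpos K₁)
    (Fset_nonempty L Ladd Lpos K₁)).mp (show lam0 L K₁ < lam0 L K₁ + ε/2 by linarith)
  obtain ⟨y₂, ⟨f₂, hf₂, rfl⟩, hy₂⟩ := (csInf_lt_iff (Fset_bddBelow L Ladd Lpos K₂)
    (Fset_nonempty L Ladd Lpos K₂)).mp (show lam0 L K₂ < lam0 L K₂ + ε/2 by linarith)
  have hmem : f₁ + f₂ ∈ Fset (K₁ ∪ K₂) := by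
    refine ⟨fun x => by have := hf₁.1 x; have := hf₂.1 x; simp; linarith, fun x hx => ?_⟩
    rcases hx with hx | hx
    · have := hf₁.2 x hx; have := hf₂.1 x; simp; linarith
    · have := hf₂.2 x hx; have := hf₁.1 x; simp; linarith
  have := lam0_le L Ladd Lpos hmem
  rw [Ladd] at this
  linarith

lemma lam0_union_disjoint {K₁ K₂ : Set X} (hK₁ : IsClosed K₁) (hK₂ : IsClosed K₂)
    (hd : Disjoint K₁ K₂) : lam0 L (K₁ ∪ K₂) = lam0 L K₁ + lam0 L K₂ := by
  refine le_antisymm (lam0_union_le L Ladd Lpos K₁ K₂) ?_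
  obtain ⟨u, hu₁, hu₂, hu01⟩ := exists_continuous_zero_one_of_isClosed hK₁ hK₂ hd
  refine le_lam0 L Ladd Lpos (fun f hf => ?_)
  have h1 : f * (1 - u) ∈ Fset K₁ := by
    refine ⟨fun x => mul_nonneg (hf.1 x) (by have := (hu01 x).2; simp; linarith), fun x hx => ?_⟩
    have hux : u x = 0 := hu₁ hx
    have h1x := hf.2 x (Or.inl hx)
    simp [hux]; linarith
  have h2 : f * u ∈ Fset K₂ := by
    refine ⟨fun x => mul_nonneg (hf.1 x) (hu01 x).1, fun x hx => ?_⟩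
    have hux : u x = 1 := hu₂ hx
    have h2x := hf.2 x (Or.inr hx)
    simp [hux]; linarith
  have hsum : f * (1 - u) + f * u = f := by ring
  have t1 := lam0_le L Ladd Lpos h1
  have t2 := lam0_le L Ladd Lpos h2
  have hL : L (f * (1 - u)) + L (f * u) = L f := by rw [← Ladd, hsum]
  linarith


/-- the content built from `L` -/
noncomputable def rcontent : Content X where
  toFun K := Real.toNNReal (lam0 L K)
  mono' K₁ K₂ h := Real.toNNReal_le_toNNReal
    (lam0_mono L Ladd Lpos h)
  sup_disjoint' K₁ K₂ hd h₁ h₂ := by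
    have := lam0_union_disjoint L Ladd Lpos (K₁ := K₁) (K₂ := K₂) h₁ h₂ hd
    simp only [TopologicalSpace.Compacts.coe_sup]
    rw [this, Real.toNNReal_add (lam0_nonneg L Ladd Lpos _) (lam0_nonneg L Ladd Lpos _)]
  sup_le' K₁ K₂ := by
    simp only [TopologicalSpace.Compacts.coe_sup]
    refine le_trans (Real.toNNReal_le_toNNReal
      (lam0_union_le L Ladd Lpos K₁ K₂)) ?_
    exact Real.toNNReal_add_le

include Lone

lemma rcontent_le_one (K : TopologicalSpace.Compacts X) :
    (rcontent L Ladd Lpos : TopologicalSpace.Compacts X → ℝ≥0∞) K ≤ 1 := by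
  change ((rcontent L Ladd Lpos).toFun K : ℝ≥0∞) ≤ _
  norm_cast
  simp only [rcontent]
  exact Real.toNNReal_le_one.mpr (lam0_le_one L Ladd Lpos Lone K)

lemma rcontent_inner_le_one (U : TopologicalSpace.Opens X) :
    (rcontent L Ladd Lpos).innerContent U ≤ 1 :=
  iSup₂_le fun K _ => rcontent_le_one L Ladd Lpos Lone K

/-- the measure -/
noncomputable def rmeas : Measure X := (rcontent L Ladd Lpos).measure

lemma rmeas_open {U : Set X} (hU : IsOpen U) :
    rmeas L Ladd Lpos U = (rcontent L Ladd Lpos).innerContent ⟨U, hU⟩ := by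
  rw [rmeas, Content.measure_apply _ hU.measurableSet]
  exact (rcontent L Ladd Lpos).outerMeasure_opens ⟨U, hU⟩

lemma rmeas_open_le_one {U : Set X} (hU : IsOpen U) : rmeas L Ladd Lpos U ≤ 1 := by
  rw [rmeas_open L Ladd Lpos Lone hU]
  exact rcontent_inner_le_one L Ladd Lpos Lone _

lemma lam0_le_rmeas {K U : Set X} (hK : IsCompact K) (hU : IsOpen U) (hKU : K ⊆ U) :
    lam0 L K ≤ (rmeas L Ladd Lpos U).toReal := by
  have h1 : ((Real.toNNReal (lam0 L K) : ℝ≥0∞)) ≤ rmeas L Ladd Lpos U := by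
    rw [rmeas_open L Ladd Lpos Lone hU]
    exact (rcontent L Ladd Lpos).le_innerContent ⟨K, hK⟩ ⟨U, hU⟩ hKU
  have h2 := ENNReal.toReal_mono (by
    exact ne_top_of_le_ne_top (by norm_num) (rmeas_open_le_one L Ladd Lpos Lone hU)) h1
  rwa [ENNReal.coe_toReal, Real.coe_toNNReal _ (lam0_nonneg L Ladd Lpos K)] at h2

/-- Claim B : lower bound for measure of open set -/
lemma rmeas_le {U : Set X} (hU : IsOpen U) {g : C(X, ℝ)} (hg0 : ∀ x, 0 ≤ g x)
    (hg1 : ∀ x ∈ U, 1 ≤ g x) : (rmeas L Ladd Lpos U).toReal ≤ L g := by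
  have hLg : 0 ≤ L g := Lpos g hg0
  have h1 : rmeas L Ladd Lpos U ≤ ENNReal.ofReal (L g) := by
    rw [rmeas_open L Ladd Lpos Lone hU]
    refine iSup₂_le fun K hKU => ?_
    change ((rcontent L Ladd Lpos).toFun K : ℝ≥0∞) ≤ _
    simp only [rcontent]
    rw [ENNReal.ofReal]
    exact_mod_cast Real.toNNReal_le_toNNReal
      (lam0_le L Ladd Lpos ⟨hg0, fun x hx => hg1 x (hKU hx)⟩)
  calc (rmeas L Ladd Lpos U).toReal ≤ (ENNReal.ofReal (L g)).toReal :=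
        ENNReal.toReal_mono ENNReal.ofReal_ne_top h1
    _ = L g := ENNReal.toReal_ofReal hLg

include Lsmul in
/-- Claim A : upper bound -/
lemma le_rmeas {U : Set X} (hU : IsOpen U) {g : C(X, ℝ)} (hg0 : ∀ x, 0 ≤ g x)
    (hg1 : ∀ x, g x ≤ 1) (hgU : ∀ x, x ∉ U → g x = 0) :
    L g ≤ (rmeas L Ladd Lpos U).toReal := by
  refine le_of_forall_pos_le_add fun δ hδ => ?_
  set K : Set X := {x | δ ≤ g x} with hKdef
  have hKc : IsClosed K := isClosed_le continuous_const g.continuous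
  have hKcomp : IsCompact K := hKc.isCompact
  have hKU : K ⊆ U := fun x hx => by
    by_contra hxU
    have := hgU x hxU
    have : δ ≤ (0:ℝ) := by rw [← this]; exact hx
    linarith
  have key : L g - δ ≤ lam0 L K := by
    refine le_lam0 L Ladd Lpos fun f hf => ?_
    have hpt : ∀ x, g x ≤ (δ • (1:C(X,ℝ)) + f) x := by
      intro x
      simp only [ContinuousMap.add_apply, ContinuousMap.smul_apply, ContinuousMap.one_apply,
        smul_eq_mul, mul_one]
      rcases le_or_gt δ (g x) with hx | hx
      · have := hf.2 x hx
        have := hg1 x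
        linarith
      · have := hf.1 x
        linarith
    have := Lmono L Ladd Lpos hpt
    rw [Ladd, Lsmul, Lone] at this
    linarith
  have := lam0_le_rmeas L Ladd Lpos Lone hKcomp hU hKU
  linarith



include Lone in
lemma L_zero : L 0 = 0 := by
  have := Ladd 0 0
  simp at this
  linarith

include Lone in
lemma L_sum (n : ℕ) (F : ℕ → C(X, ℝ)) :
    L (∑ k ∈ Finset.range n, F k) = ∑ k ∈ Finset.range n, L (F k) := by
  induction n with
  | zero => simpa using L_zero L Ladd Lpos Lone
  | succ n ih => rw [Finset.sum_range_succ, Finset.sum_range_succ, Ladd, ih]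

include Lone in
lemma rmeas_univ : rmeas L Ladd Lpos (Set.univ : Set X) = 1 := by
  have h1 : lam0 L (Set.univ : Set X) = 1 := by
    refine le_antisymm ?_ ?_
    · have hm : (1:C(X,ℝ)) ∈ Fset (Set.univ : Set X) := one_mem_Fset L Ladd Lpos _
      have := lam0_le L Ladd Lpos hm
      rwa [Lone] at this
    · refine le_lam0 L Ladd Lpos fun f hf => ?_
      have := Lmono L Ladd Lpos (f := 1) (g := f) (fun x => hf.2 x trivial)
      rwa [Lone] at this
  refine le_antisymm (rmeas_open_le_one L Ladd Lpos Lone isOpen_univ) ?_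
  have h2 := lam0_le_rmeas L Ladd Lpos Lone isCompact_univ isOpen_univ (subset_refl _)
  rw [h1] at h2
  have h3 : rmeas L Ladd Lpos (Set.univ : Set X) ≠ ⊤ :=
    ne_top_of_le_ne_top (by norm_num) (rmeas_open_le_one L Ladd Lpos Lone isOpen_univ)
  rw [← ENNReal.ofReal_one, ← ENNReal.ofReal_toReal h3]
  exact ENNReal.ofReal_le_ofReal h2

include Lone in
lemma rmeas_prob : IsProbabilityMeasure (rmeas L Ladd Lpos) :=
  ⟨rmeas_univ L Ladd Lpos Lone⟩

include Lone Lsmul in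
lemma repr01 {g : C(X, ℝ)} (hg0 : ∀ x, 0 ≤ g x) (hg1 : ∀ x, g x ≤ 1) :
    ∫ x, g x ∂(rmeas L Ladd Lpos) = L g := by
  set ν := rmeas L Ladd Lpos with hν
  haveI : IsProbabilityMeasure ν := rmeas_prob L Ladd Lpos Lone
  have key : ∀ N : ℕ, 1 ≤ N → |(∫ x, g x ∂ν) - L g| ≤ 1/(N:ℝ) := by
    intro N hN
    have hNr : (0:ℝ) < N := by exact_mod_cast hN
    set Nr : ℝ := (N : ℝ) with hNrdef
    have hNrinv : (0:ℝ) < 1/Nr := by positivity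
    set p : ℕ → C(X, ℝ) := fun k =>
      ⟨fun x => min (max (g x - k/Nr) 0) (1/Nr),
        Continuous.min (Continuous.max (g.continuous.sub continuous_const) continuous_const)
          continuous_const⟩ with hp
    set U : ℕ → Set X := fun j => {x | (j:ℝ)/Nr < g x} with hU
    have hUopen : ∀ j, IsOpen (U j) := fun j => isOpen_lt continuous_const g.continuous
    set νr : ℕ → ℝ := fun j => (ν (U j)).toReal with hνr
    have hνr0 : ∀ j, 0 ≤ νr j := fun j => ENNReal.toReal_nonneg
    have hνr1 : ∀ j, νr j ≤ 1 := by
      intro j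
      have h1 := ENNReal.toReal_mono (ENNReal.one_ne_top) (prob_le_one (μ := ν) (s := U j))
      simpa using h1
    have hediv : ∀ k : ℕ, ((k:ℝ)+1)/Nr = (k:ℝ)/Nr + 1/Nr := fun k => by rw [add_div]
    have hp0 : ∀ k x, 0 ≤ p k x := by
      intro k x
      exact le_min (le_max_right _ _) (by positivity)
    have hple : ∀ k x, p k x ≤ 1/Nr := fun k x => min_le_right _ _
    have hvanish : ∀ k x, x ∉ U k → p k x = 0 := by
      intro k x hx
      have hgx : g x ≤ k/Nr := not_lt.mp hx
      have h1 : max (g x - k/Nr) 0 = 0 := max_eq_right (by linarith)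
      simp only [hp, ContinuousMap.coe_mk, h1]
      exact min_eq_left (by positivity)
    have hfull : ∀ k x, x ∈ U (k+1) → p k x = 1/Nr := by
      intro k x hx
      have hgx : ((k:ℝ)+1)/Nr < g x := by
        have h0 : (((k+1):ℕ):ℝ)/Nr < g x := hx
        push_cast at h0
        linarith
      rw [hediv k] at hgx
      have h2 : max (g x - k/Nr) 0 = g x - k/Nr := max_eq_left (by linarith)
      simp only [hp, ContinuousMap.coe_mk, h2]
      exact min_eq_right (by linarith)
    have htel : ∀ k x, p k x = min (g x) (((k:ℝ)+1)/Nr) - min (g x) ((k:ℝ)/Nr) := by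
      intro k x
      simp only [hp, ContinuousMap.coe_mk]
      rw [hediv k]
      rcases le_or_gt (g x) ((k:ℝ)/Nr) with h | h
      · have e1 : max (g x - (k:ℝ)/Nr) 0 = 0 := max_eq_right (by linarith)
        have e2 : min (0:ℝ) (1/Nr) = 0 := min_eq_left (by positivity)
        have e3 : min (g x) ((k:ℝ)/Nr + 1/Nr) = g x := min_eq_left (by linarith)
        have e4 : min (g x) ((k:ℝ)/Nr) = g x := min_eq_left h
        rw [e1, e2, e3, e4]; ring
      · rcases le_or_gt (g x) ((k:ℝ)/Nr + 1/Nr) with h' | h'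
        · have e1 : max (g x - (k:ℝ)/Nr) 0 = g x - (k:ℝ)/Nr := max_eq_left (by linarith)
          have e2 : min (g x - (k:ℝ)/Nr) (1/Nr) = g x - (k:ℝ)/Nr := min_eq_left (by linarith)
          have e3 : min (g x) ((k:ℝ)/Nr + 1/Nr) = g x := min_eq_left h'
          have e4 : min (g x) ((k:ℝ)/Nr) = (k:ℝ)/Nr := min_eq_right h.le
          rw [e1, e2, e3, e4]
        · have e1 : max (g x - (k:ℝ)/Nr) 0 = g x - (k:ℝ)/Nr := max_eq_left (by linarith)
          have e2 : min (g x - (k:ℝ)/Nr) (1/Nr) = 1/Nr := min_eq_right (by linarith)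
          have e3 : min (g x) ((k:ℝ)/Nr + 1/Nr) = (k:ℝ)/Nr + 1/Nr := min_eq_right h'.le
          have e4 : min (g x) ((k:ℝ)/Nr) = (k:ℝ)/Nr := min_eq_right (by linarith)
          rw [e1, e2, e3, e4]; ring
    have hsumpt : ∀ x, ∑ k ∈ Finset.range N, p k x = g x := by
      intro x
      have hsr := Finset.sum_range_sub (fun j : ℕ => min (g x) ((j:ℝ)/Nr)) N
      have hcongr : ∑ k ∈ Finset.range N, p k x =
          ∑ k ∈ Finset.range N, (min (g x) ((((k+1):ℕ):ℝ)/Nr) - min (g x) ((k:ℝ)/Nr)) :=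
        Finset.sum_congr rfl (fun k _ => by push_cast; exact htel k x)
      rw [hcongr, hsr]
      simp only [Nat.cast_zero, zero_div]
      rw [div_self (ne_of_gt hNr), min_eq_left (hg1 x), min_eq_right (hg0 x)]
      ring
    have hgsum : g = ∑ k ∈ Finset.range N, p k := by
      ext x
      rw [← hsumpt x]
      simp
    -- L bounds
    have bL_up : ∀ k : ℕ, L (p k) ≤ (1/Nr) * νr k := by
      intro k
      have h1 : L (Nr • p k) ≤ νr k := by
        refine le_rmeas L Ladd Lpos Lone Lsmul (hUopen k) ?_ ?_ ?_
        · intro x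
          simp only [ContinuousMap.smul_apply, smul_eq_mul]
          exact mul_nonneg (le_of_lt hNr) (hp0 k x)
        · intro x
          simp only [ContinuousMap.smul_apply, smul_eq_mul]
          calc Nr * p k x ≤ Nr * (1/Nr) := by
                have := hple k x
                nlinarith
            _ = 1 := by field_simp
        · intro x hx
          simp only [ContinuousMap.smul_apply, smul_eq_mul, hvanish k x hx, mul_zero]
      rw [Lsmul] at h1
      calc L (p k) = (1/Nr) * (Nr * L (p k)) := by field_simp
        _ ≤ (1/Nr) * νr k := by
            apply mul_le_mul_of_nonneg_left h1 (le_of_lt hNrinv)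
    have bL_lo : ∀ k : ℕ, (1/Nr) * νr (k+1) ≤ L (p k) := by
      intro k
      have h1 : νr (k+1) ≤ L (Nr • p k) := by
        refine rmeas_le L Ladd Lpos Lone (hUopen (k+1)) ?_ ?_
        · intro x
          simp only [ContinuousMap.smul_apply, smul_eq_mul]
          exact mul_nonneg (le_of_lt hNr) (hp0 k x)
        · intro x hx
          simp only [ContinuousMap.smul_apply, smul_eq_mul, hfull k x hx]
          rw [mul_one_div, div_self (ne_of_gt hNr)]
      rw [Lsmul] at h1
      calc (1/Nr) * νr (k+1) ≤ (1/Nr) * (Nr * L (p k)) := by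
            apply mul_le_mul_of_nonneg_left h1 (le_of_lt hNrinv)
        _ = L (p k) := by field_simp
    -- integral bounds
    have hUmeas : ∀ j, MeasurableSet (U j) := fun j => (hUopen j).measurableSet
    have hIndInt : ∀ (j : ℕ) (c : ℝ), Integrable ((U j).indicator (fun _ => c)) ν :=
      fun j c => (integrable_const c).indicator (hUmeas j)
    have bI_up : ∀ k : ℕ, ∫ x, p k x ∂ν ≤ (1/Nr) * νr k := by
      intro k
      have hmono : ∀ x, p k x ≤ (U k).indicator (fun _ => 1/Nr) x := by
        intro x
        by_cases hx : x ∈ U k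
        · rw [Set.indicator_of_mem hx]
          exact hple k x
        · rw [Set.indicator_of_notMem hx, hvanish k x hx]
      calc ∫ x, p k x ∂ν ≤ ∫ x, (U k).indicator (fun _ => 1/Nr) x ∂ν :=
            integral_mono (cont_integrable (p k) ν) (hIndInt k _) hmono
        _ = (ν (U k)).toReal • (1/Nr) := integral_indicator_const _ (hUmeas k)
        _ = (1/Nr) * νr k := by rw [smul_eq_mul]; ring
    have bI_lo : ∀ k : ℕ, (1/Nr) * νr (k+1) ≤ ∫ x, p k x ∂ν := by
      intro k
      have hmono : ∀ x, (U (k+1)).indicator (fun _ => 1/Nr) x ≤ p k x := by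
        intro x
        by_cases hx : x ∈ U (k+1)
        · rw [Set.indicator_of_mem hx, hfull k x hx]
        · rw [Set.indicator_of_notMem hx]
          exact hp0 k x
      calc (1/Nr) * νr (k+1) = (ν (U (k+1))).toReal • (1/Nr) := by rw [smul_eq_mul]; ring
        _ = ∫ x, (U (k+1)).indicator (fun _ => 1/Nr) x ∂ν :=
            (integral_indicator_const _ (hUmeas (k+1))).symm
        _ ≤ ∫ x, p k x ∂ν := integral_mono (hIndInt (k+1) _) (cont_integrable (p k) ν) hmono
    -- sums
    have hLsum : L g = ∑ k ∈ Finset.range N, L (p k) := by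
      rw [hgsum, L_sum L Ladd Lpos Lone]
    have hIsum : ∫ x, g x ∂ν = ∑ k ∈ Finset.range N, ∫ x, p k x ∂ν := by
      have : ∫ x, g x ∂ν = ∫ x, (∑ k ∈ Finset.range N, p k) x ∂ν := by rw [← hgsum]
      rw [this]
      have : ∀ x, (∑ k ∈ Finset.range N, p k) x = ∑ k ∈ Finset.range N, p k x := by
        intro x; simp
      rw [integral_congr_ae (Filter.Eventually.of_forall this)]
      exact integral_finset_sum _ (fun k _ => cont_integrable (p k) ν)
    have hNsub : N - 1 + 1 = N := Nat.succ_pred_eq_of_pos hN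
    have hSsplit : ∑ k ∈ Finset.range N, (1/Nr) * νr k =
        (∑ k ∈ Finset.range (N-1), (1/Nr) * νr (k+1)) + (1/Nr) * νr 0 := by
      rw [← hNsub]
      exact Finset.sum_range_succ' _ _
    -- upper: L g ≤ 1/Nr + ∫ g
    have hup : L g ≤ 1/Nr + ∫ x, g x ∂ν := by
      have h1 : L g ≤ ∑ k ∈ Finset.range N, (1/Nr) * νr k := by
        rw [hLsum]
        exact Finset.sum_le_sum (fun k _ => bL_up k)
      have h2 : (∑ k ∈ Finset.range (N-1), (1/Nr) * νr (k+1)) ≤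
          ∑ k ∈ Finset.range (N-1), ∫ x, p k x ∂ν :=
        Finset.sum_le_sum (fun k _ => bI_lo k)
      have h3 : (∑ k ∈ Finset.range (N-1), ∫ x, p k x ∂ν) ≤
          ∑ k ∈ Finset.range N, ∫ x, p k x ∂ν := by
        refine Finset.sum_le_sum_of_subset_of_nonneg
          (Finset.range_subset_range.mpr (Nat.sub_le N 1)) ?_
        intro k _ _
        exact integral_nonneg (fun x => hp0 k x)
      have h4 : (1/Nr) * νr 0 ≤ 1/Nr := by
        nlinarith [hνr1 0, hνr0 0]
      rw [hIsum]
      calc L g ≤ ∑ k ∈ Finset.range N, (1/Nr) * νr k := h1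
        _ = (∑ k ∈ Finset.range (N-1), (1/Nr) * νr (k+1)) + (1/Nr) * νr 0 := hSsplit
        _ ≤ (∑ k ∈ Finset.range N, ∫ x, p k x ∂ν) + 1/Nr := add_le_add (h2.trans h3) h4
        _ = 1/Nr + ∑ k ∈ Finset.range N, ∫ x, p k x ∂ν := by ring
    -- lower: ∫ g ≤ 1/Nr + L g
    have hlo : ∫ x, g x ∂ν ≤ 1/Nr + L g := by
      have h1 : ∫ x, g x ∂ν ≤ ∑ k ∈ Finset.range N, (1/Nr) * νr k := by
        rw [hIsum]
        exact Finset.sum_le_sum (fun k _ => bI_up k)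
      have h2 : (∑ k ∈ Finset.range (N-1), (1/Nr) * νr (k+1)) ≤
          ∑ k ∈ Finset.range (N-1), L (p k) :=
        Finset.sum_le_sum (fun k _ => bL_lo k)
      have h3 : (∑ k ∈ Finset.range (N-1), L (p k)) ≤ ∑ k ∈ Finset.range N, L (p k) := by
        refine Finset.sum_le_sum_of_subset_of_nonneg
          (Finset.range_subset_range.mpr (Nat.sub_le N 1)) ?_
        intro k _ _
        exact Lpos _ (fun x => hp0 k x)
      have h4 : (1/Nr) * νr 0 ≤ 1/Nr := by
        nlinarith [hνr1 0, hνr0 0]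
      calc ∫ x, g x ∂ν ≤ ∑ k ∈ Finset.range N, (1/Nr) * νr k := h1
        _ = (∑ k ∈ Finset.range (N-1), (1/Nr) * νr (k+1)) + (1/Nr) * νr 0 := hSsplit
        _ ≤ (∑ k ∈ Finset.range N, L (p k)) + 1/Nr := add_le_add (h2.trans h3) h4
        _ = 1/Nr + L g := by rw [hLsum]; ring
    rw [abs_sub_le_iff]
    constructor <;> linarith
  have habs : ∀ ε : ℝ, 0 < ε → |(∫ x, g x ∂ν) - L g| ≤ ε := by
    intro ε hε
    obtain ⟨n, hn⟩ := exists_nat_one_div_lt hε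
    have := key (n+1) (Nat.succ_le_succ (Nat.zero_le n))
    have hcast : ((n+1:ℕ):ℝ) = (n:ℝ) + 1 := by push_cast; ring
    rw [hcast] at this
    linarith
  have : |(∫ x, g x ∂ν) - L g| ≤ 0 := le_of_forall_pos_le_add (by
    intro ε hε
    simpa using habs ε hε)
  have := abs_nonpos_iff.mp this
  linarith [sub_eq_zero.mp this]

include Lone Lsmul in
lemma repr_all (f : C(X, ℝ)) : ∫ x, f x ∂(rmeas L Ladd Lpos) = L f := by
  set ν := rmeas L Ladd Lpos with hν
  haveI : IsProbabilityMeasure ν := rmeas_prob L Ladd Lpos Lone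
  set c : ℝ := ‖f‖ + 1 with hc
  have hc0 : 0 < c := by positivity
  have hfx : ∀ x, |f x| ≤ ‖f‖ := fun x => by
    simpa using f.norm_coe_le_norm x
  set g : C(X, ℝ) := (2*c)⁻¹ • (f + ContinuousMap.const X c) with hg
  have hgx : ∀ x, g x = (2*c)⁻¹ * (f x + c) := fun x => by
    simp [hg, ContinuousMap.const_apply]
    ring
  have hg0 : ∀ x, 0 ≤ g x := by
    intro x
    rw [hgx x]
    have := (abs_le.mp (hfx x)).1
    have h2c : (0:ℝ) < (2*c)⁻¹ := by positivity
    nlinarith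
  have hg1 : ∀ x, g x ≤ 1 := by
    intro x
    rw [hgx x]
    have := (abs_le.mp (hfx x)).2
    rw [inv_mul_le_iff₀ (by positivity)]
    nlinarith
  have h01 := repr01 L Ladd Lpos Lone Lsmul hg0 hg1
  have hconst : ContinuousMap.const X c = c • (1 : C(X,ℝ)) := by
    ext x; simp
  have hLg : L g = (2*c)⁻¹ * (L f + c) := by
    rw [hg, Lsmul, Ladd, hconst, Lsmul, Lone]
    ring
  have hIg : ∫ x, g x ∂ν = (2*c)⁻¹ * ((∫ x, f x ∂ν) + c) := by
    have : ∫ x, g x ∂ν = ∫ x, (2*c)⁻¹ * (f x + c) ∂ν := by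
      apply integral_congr_ae
      exact Filter.Eventually.of_forall (fun x => hgx x)
    rw [this, integral_const_mul, integral_add (cont_integrable f ν) (integrable_const c),
      integral_const]
    simp
  rw [hIg, hLg] at h01
  have h2c : ((2*c)⁻¹ : ℝ) ≠ 0 := by positivity
  have := mul_left_cancel₀ h2c h01
  linarith

include Lone Lsmul in
lemma riesz_exists : ∃ ν : ProbabilityMeasure X,
    ∀ f : C(X, ℝ), ∫ x, f x ∂(ν : Measure X) = L f :=
  ⟨⟨rmeas L Ladd Lpos, rmeas_prob L Ladd Lpos Lone⟩, fun f => repr_all L Ladd Lpos Lone Lsmul f⟩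

end
end Riesz

section Extract
variable {X : Type*} [MetricSpace X] [CompactSpace X] [Nonempty X]
    [MeasurableSpace X] [BorelSpace X]

lemma integral_bound (f : C(X, ℝ)) (μ : Measure X) [IsProbabilityMeasure μ] :
    |∫ x, f x ∂μ| ≤ ‖f‖ := by
  have h := norm_integral_le_of_norm_le_const (μ := μ) (f := fun x => f x) (C := ‖f‖)
    (Filter.Eventually.of_forall (fun x => f.norm_coe_le_norm x))
  simpa using h

lemma integral_dist_le (f g : C(X, ℝ)) (μ : Measure X) [IsProbabilityMeasure μ] :
    |(∫ x, f x ∂μ) - ∫ x, g x ∂μ| ≤ dist f g := by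
  rw [← integral_sub (cont_integrable f μ) (cont_integrable g μ)]
  have h := norm_integral_le_of_norm_le_const (μ := μ) (f := fun x => f x - g x) (C := dist f g)
    (Filter.Eventually.of_forall (fun x => by
      rw [← dist_eq_norm]
      exact ContinuousMap.dist_apply_le_dist x))
  simpa using h

lemma exists_subseq_integral_tendsto (μs : ℕ → ProbabilityMeasure X) :
    ∃ (ψ : ℕ → ℕ) (L : C(X, ℝ) → ℝ), StrictMono ψ ∧
      ∀ f : C(X, ℝ), Filter.Tendsto (fun i => ∫ t, f t ∂(μs (ψ i) : Measure X))
        Filter.atTop (nhds (L f)) := by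
  set D : ℕ → C(X, ℝ) := TopologicalSpace.denseSeq C(X, ℝ) with hD
  have hDd : DenseRange D := TopologicalSpace.denseRange_denseSeq _
  set S : Set (ℕ → ℝ) := Set.pi Set.univ (fun j => Set.Icc (-‖D j‖) ‖D j‖) with hS
  have hScomp : IsCompact S := isCompact_univ_pi (fun j => isCompact_Icc)
  set x : ℕ → ℕ → ℝ := fun i j => ∫ t, D j t ∂(μs i : Measure X) with hx
  have hxS : ∀ i, x i ∈ S := by
    intro i j _
    have := integral_bound (D j) (μs i : Measure X)
    rw [abs_le] at this
    exact ⟨this.1, this.2⟩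
  obtain ⟨a, haS, ψ, hψ, hconv⟩ := hScomp.tendsto_subseq hxS
  have hconv' : ∀ j, Filter.Tendsto (fun i => x (ψ i) j) Filter.atTop (nhds (a j)) := by
    intro j
    have := Filter.Tendsto.comp ((continuous_apply j).tendsto a) hconv
    exact this
  have hcauchy : ∀ f : C(X, ℝ), CauchySeq (fun i => ∫ t, f t ∂(μs (ψ i) : Measure X)) := by
    intro f
    rw [Metric.cauchySeq_iff]
    intro ε hε
    obtain ⟨j, hj⟩ := Metric.denseRange_iff.mp hDd f (ε/3) (by linarith)
    obtain ⟨N, hN⟩ := Metric.cauchySeq_iff.mp (hconv' j).cauchySeq (ε/3) (by linarith)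
    refine ⟨N, fun m hm n hn => ?_⟩
    have h1 := integral_dist_le f (D j) (μs (ψ m) : Measure X)
    have h2 := integral_dist_le f (D j) (μs (ψ n) : Measure X)
    have h3 := hN m hm n hn
    rw [Real.dist_eq] at h3 ⊢
    have e1 : x (ψ m) j = ∫ t, D j t ∂(μs (ψ m) : Measure X) := rfl
    have e2 : x (ψ n) j = ∫ t, D j t ∂(μs (ψ n) : Measure X) := rfl
    rw [e1, e2] at h3
    have habs : |(∫ t, f t ∂(μs (ψ m) : Measure X)) - ∫ t, f t ∂(μs (ψ n) : Measure X)| ≤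
        |(∫ t, f t ∂(μs (ψ m) : Measure X)) - ∫ t, D j t ∂(μs (ψ m) : Measure X)| +
        |(∫ t, D j t ∂(μs (ψ m) : Measure X)) - ∫ t, D j t ∂(μs (ψ n) : Measure X)| +
        |(∫ t, D j t ∂(μs (ψ n) : Measure X)) - ∫ t, f t ∂(μs (ψ n) : Measure X)| := by
      have t1 := abs_sub_le (∫ t, f t ∂(μs (ψ m) : Measure X))
        (∫ t, D j t ∂(μs (ψ m) : Measure X)) (∫ t, f t ∂(μs (ψ n) : Measure X))
      have t2 := abs_sub_le (∫ t, D j t ∂(μs (ψ m) : Measure X))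
        (∫ t, D j t ∂(μs (ψ n) : Measure X)) (∫ t, f t ∂(μs (ψ n) : Measure X))
      linarith
    have h2' : |(∫ t, D j t ∂(μs (ψ n) : Measure X)) - ∫ t, f t ∂(μs (ψ n) : Measure X)| ≤
        dist f (D j) := by
      rw [abs_sub_comm]; exact h2
    calc |(∫ t, f t ∂(μs (ψ m) : Measure X)) - ∫ t, f t ∂(μs (ψ n) : Measure X)| ≤ _ := habs
      _ < ε/3 + ε/3 + ε/3 := by
          refine add_lt_add (add_lt_add_of_le_of_lt (lt_of_le_of_lt h1 hj).le h3) (lt_of_le_of_lt h2' hj)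
      _ = ε := by ring
  have hlim : ∀ f : C(X, ℝ), ∃ l : ℝ,
      Filter.Tendsto (fun i => ∫ t, f t ∂(μs (ψ i) : Measure X)) Filter.atTop (nhds l) :=
    fun f => cauchySeq_tendsto_of_complete (hcauchy f)
  choose L hL using hlim
  exact ⟨ψ, L, hψ, hL⟩

lemma exists_subseq_weak_limit (μs : ℕ → ProbabilityMeasure X) :
    ∃ (ψ : ℕ → ℕ) (ν : ProbabilityMeasure X), StrictMono ψ ∧
      (∀ f : C(X, ℝ), Filter.Tendsto (fun i => ∫ t, f t ∂(μs (ψ i) : Measure X))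
        Filter.atTop (nhds (∫ t, f t ∂(ν : Measure X)))) ∧
      Filter.Tendsto (fun i => μs (ψ i)) Filter.atTop (nhds ν) := by
  obtain ⟨ψ, L, hψ, hL⟩ := exists_subseq_integral_tendsto μs
  have Ladd : ∀ f g, L (f + g) = L f + L g := by
    intro f g
    refine tendsto_nhds_unique ?_ ((hL f).add (hL g))
    have : ∀ i, ∫ t, (f + g) t ∂(μs (ψ i) : Measure X) =
        (∫ t, f t ∂(μs (ψ i) : Measure X)) + ∫ t, g t ∂(μs (ψ i) : Measure X) := by
      intro i
      rw [← integral_add (cont_integrable f _) (cont_integrable g _)]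
      simp
    simpa only [this] using hL (f + g)
  have Lpos : ∀ f : C(X, ℝ), (∀ t, 0 ≤ f t) → 0 ≤ L f := by
    intro f hf
    exact ge_of_tendsto (hL f) (Filter.Eventually.of_forall fun i =>
      integral_nonneg (fun t => hf t))
  have Lone : L 1 = 1 := by
    refine tendsto_nhds_unique ?_ (tendsto_const_nhds : Filter.Tendsto (fun _ : ℕ => (1:ℝ)) Filter.atTop (nhds 1))
    have : ∀ i, ∫ t, (1 : C(X, ℝ)) t ∂(μs (ψ i) : Measure X) = 1 := by
      intro i
      simp
    simpa only [this] using hL 1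
  have Lsmul : ∀ (c : ℝ) (f : C(X, ℝ)), L (c • f) = c * L f := by
    intro c f
    refine tendsto_nhds_unique ?_ ((hL f).const_mul c)
    have : ∀ i, ∫ t, (c • f) t ∂(μs (ψ i) : Measure X) =
        c * ∫ t, f t ∂(μs (ψ i) : Measure X) := by
      intro i
      rw [← integral_const_mul]
      simp
    simpa only [this] using hL (c • f)
  obtain ⟨ν, hν⟩ := riesz_exists L Ladd Lpos Lone Lsmul
  refine ⟨ψ, ν, hψ, fun f => (hν f) ▸ hL f, ?_⟩
  rw [MeasureTheory.ProbabilityMeasure.tendsto_iff_forall_integral_tendsto]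
  intro f
  have := (hν f.toContinuousMap) ▸ hL f.toContinuousMap
  simpa using this

end Extract

/-- with `φ_m` subadditive continuous potentials for a continuous map `T`
on a compact metric space, `χ(μ) = lim_m (1/m)∫φ_m dμ` for invariant `μ`, and the
entropy map `μ ↦ h_μ(T)` upper semicontinuous,
`lim_m sup_μ (1/m)(m h_μ(T) + ∫ φ_m dμ) ≤ sup_μ (h_μ(T) + χ(μ))`. -/
theorem stmt9 {Λ : Type*} [MetricSpace Λ] [CompactSpace Λ] [Nonempty Λ]
    [MeasurableSpace Λ] [BorelSpace Λ]
    (T : Λ → Λ) (hT : Continuous T)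
    (φ : ℕ → Λ → ℝ) (hφc : ∀ m, Continuous (φ m))
    (hsub : ∀ m n, 1 ≤ m → 1 ≤ n → ∀ x, φ (m + n) x ≤ φ m x + φ n (T^[m] x))
    (h : ProbabilityMeasure Λ → ℝ)
    (hsc : UpperSemicontinuous h) (hhb : BddAbove (Set.range h)) (hh0 : ∀ μ, 0 ≤ h μ)
    (hex : ∃ μ : ProbabilityMeasure Λ, Measure.map T (μ : Measure Λ) = (μ : Measure Λ))
    (χ : ProbabilityMeasure Λ → ℝ)
    (hχ : ∀ μ : ProbabilityMeasure Λ,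
      Measure.map T (μ : Measure Λ) = (μ : Measure Λ) →
      Filter.Tendsto (fun m : ℕ => (∫ x, φ m x ∂(μ : Measure Λ)) / m)
        Filter.atTop (nhds (χ μ))) :
    Filter.limsup (fun m : ℕ => sSup {r : ℝ | ∃ μ : ProbabilityMeasure Λ,
        Measure.map T (μ : Measure Λ) = (μ : Measure Λ) ∧
        r = h μ + (∫ x, φ m x ∂(μ : Measure Λ)) / m}) Filter.atTop
      ≤ sSup {r : ℝ | ∃ μ : ProbabilityMeasure Λ,
        Measure.map T (μ : Measure Λ) = (μ : Measure Λ) ∧ r = h μ + χ μ} := by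
  classical
  obtain ⟨μ0, hμ0⟩ := hex
  obtain ⟨Hb, hHb⟩ := hhb
  have hHb' : ∀ μ, h μ ≤ Hb := fun μ => hHb (Set.mem_range_self μ)
  set cφ : ℕ → C(Λ, ℝ) := fun m => ⟨φ m, hφc m⟩ with hcφ
  set B : ℕ → ℝ := fun m => ‖cφ m‖ with hBdef
  have hB0 : ∀ m, 0 ≤ B m := fun m => norm_nonneg _
  set a : ProbabilityMeasure Λ → ℕ → ℝ := fun μ m => ∫ x, φ m x ∂(μ : Measure Λ) with ha
  have haint : ∀ (μ : ProbabilityMeasure Λ) (m : ℕ), Integrable (φ m) (μ : Measure Λ) :=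
    fun μ m => cont_integrable (cφ m) _
  have haB : ∀ (μ : ProbabilityMeasure Λ) (m : ℕ), |a μ m| ≤ B m := fun μ m =>
    integral_bound (cφ m) _
  -- invariance under iterates
  have hmap : ∀ (μ : ProbabilityMeasure Λ), Measure.map T ↑μ = ↑μ → ∀ j : ℕ,
      Measure.map (T^[j]) (μ : Measure Λ) = (μ : Measure Λ) := by
    intro μ hμ j
    induction j with
    | zero => simp
    | succ j ih =>
      rw [Function.iterate_succ, ← Measure.map_map (hT.measurable.iterate j) hT.measurable,
        hμ, ih]
  have hinvint : ∀ (μ : ProbabilityMeasure Λ), Measure.map T ↑μ = ↑μ →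
      ∀ (j : ℕ) (g : C(Λ, ℝ)),
      ∫ x, g (T^[j] x) ∂(μ : Measure Λ) = ∫ x, g x ∂(μ : Measure Λ) := by
    intro μ hμ j g
    conv_rhs => rw [← hmap μ hμ j]
    rw [integral_map (hT.measurable.iterate j).aemeasurable g.continuous.aestronglyMeasurable]
  -- subadditivity of integrals
  have hsubint : ∀ (μ : ProbabilityMeasure Λ), Measure.map T ↑μ = ↑μ → ∀ m n, 1 ≤ m → 1 ≤ n →
      a μ (m + n) ≤ a μ m + a μ n := by
    intro μ hμ m n hm hn
    have hcomp : Continuous fun x => φ n (T^[m] x) := (hφc n).comp (hT.iterate m)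
    have hint2 : Integrable (fun x => φ n (T^[m] x)) (μ : Measure Λ) :=
      cont_integrable ⟨_, hcomp⟩ _
    have h1 : a μ (m + n) ≤ ∫ x, (φ m x + φ n (T^[m] x)) ∂(μ : Measure Λ) := by
      refine integral_mono (haint μ _) ((haint μ m).add hint2) (fun x => hsub m n hm hn x)
    rw [integral_add (haint μ m) hint2] at h1
    have h2 : ∫ x, φ n (T^[m] x) ∂(μ : Measure Λ) = a μ n := hinvint μ hμ m (cφ n)
    simp only [ha]
    simp only [ha] at h1
    linarith
  -- iterated chain
  have hchain : ∀ (μ : ProbabilityMeasure Λ), Measure.map T ↑μ = ↑μ → ∀ m, 1 ≤ m →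
      ∀ (q r : ℕ), 1 ≤ r → a μ (q * m + r) ≤ q * a μ m + a μ r := by
    intro μ hμ m hm q
    induction q with
    | zero => intro r hr; simp
    | succ q ih =>
      intro r hr
      have h1 : (q + 1) * m + r = m + (q * m + r) := by ring
      rw [h1]
      calc a μ (m + (q * m + r)) ≤ a μ m + a μ (q * m + r) :=
            hsubint μ hμ m (q * m + r) hm (by omega)
        _ ≤ a μ m + ((q : ℝ) * a μ m + a μ r) := by linarith [ih r hr]
        _ = ((q + 1 : ℕ) : ℝ) * a μ m + a μ r := by push_cast; ring
  set Cm : ℕ → ℝ := fun m => ∑ j ∈ Finset.Ico m (2 * m), B j with hCmdef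
  have hCm0 : ∀ m, 0 ≤ Cm m := fun m => Finset.sum_nonneg (fun j _ => hB0 j)
  have hCmB : ∀ m r, m ≤ r → r < 2 * m → B r ≤ Cm m := fun m r h1 h2 =>
    Finset.single_le_sum (f := B) (fun j _ => hB0 j) (Finset.mem_Ico.mpr ⟨h1, h2⟩)
  -- THE key uniform inequality
  have key : ∀ (μ : ProbabilityMeasure Λ), Measure.map T ↑μ = ↑μ → ∀ m, 1 ≤ m →
      ∀ n, m ≤ n → a μ n / n ≤ a μ m / m + 3 * Cm m / n := by
    intro μ hμ m hm n hmn
    set q := (n - m) / m with hq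
    set r := (n - m) % m + m with hr
    have hm0 : 0 < m := hm
    have hrm : m ≤ r := Nat.le_add_left m _
    have hr2 : r < 2 * m := by
      have := Nat.mod_lt (n - m) hm0
      omega
    have hn_eq : n = q * m + r := by
      have h0 : m * q + (n - m) % m = n - m := by rw [hq]; exact Nat.div_add_mod _ _
      have h1 : q * m = m * q := Nat.mul_comm q m
      omega
    have hineq := hchain μ hμ m hm q r (le_trans hm hrm)
    rw [← hn_eq] at hineq
    have hmR : (0 : ℝ) < m := by exact_mod_cast hm0
    have hnR : (0 : ℝ) < n := by exact_mod_cast lt_of_lt_of_le hm0 hmn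
    have hnqr : (n : ℝ) = q * m + r := by exact_mod_cast hn_eq
    have hrR : (r : ℝ) ≤ 2 * m := by exact_mod_cast hr2.le
    have hrR' : (m : ℝ) ≤ r := by exact_mod_cast hrm
    have hAm' : -Cm m ≤ a μ m ∧ a μ m ≤ Cm m := by
      have := abs_le.mp (le_trans (haB μ m) (hCmB m m le_rfl (by omega)))
      exact this
    have hAr' : -Cm m ≤ a μ r ∧ a μ r ≤ Cm m := by
      have := abs_le.mp (le_trans (haB μ r) (hCmB m r hrm hr2))
      exact this
    rw [div_add_div _ _ (ne_of_gt hmR) (ne_of_gt hnR), div_le_div_iff₀ hnR (mul_pos hmR hnR)]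
    have hq0 : (0 : ℝ) ≤ q := Nat.cast_nonneg q
    have s1 : (m : ℝ) * a μ r ≤ m * Cm m := mul_le_mul_of_nonneg_left hAr'.2 hmR.le
    have s2 : (r : ℝ) * (-a μ m) ≤ r * Cm m :=
      mul_le_mul_of_nonneg_left (by linarith [hAm'.1]) (by linarith)
    have s3 : (r : ℝ) * Cm m ≤ 2 * m * Cm m := mul_le_mul_of_nonneg_right hrR (hCm0 m)
    have e : a μ m * n = a μ m * (q * m) + a μ m * r := by rw [hnqr]; ring
    have core : (q : ℝ) * m * a μ m + m * a μ r ≤ a μ m * n + 3 * Cm m * m := by nlinarith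
    have step := mul_le_mul_of_nonneg_right core hnR.le
    calc a μ n * (m * n) ≤ ((q : ℝ) * a μ m + a μ r) * (m * n) :=
          mul_le_mul_of_nonneg_right hineq (mul_pos hmR hnR).le
      _ = ((q : ℝ) * m * a μ m + m * a μ r) * n := by ring
      _ ≤ (a μ m * n + 3 * Cm m * m) * n := step
      _ = (a μ m * n + m * (3 * Cm m)) * n := by ring
  -- the suprema
  set P : ℕ → ℝ := fun m => sSup {r : ℝ | ∃ μ : ProbabilityMeasure Λ,
      Measure.map T (μ : Measure Λ) = (μ : Measure Λ) ∧
      r = h μ + (∫ x, φ m x ∂(μ : Measure Λ)) / m} with hPdef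
  have hmem : ∀ (m : ℕ) (μ : ProbabilityMeasure Λ), Measure.map T ↑μ = ↑μ →
      h μ + a μ m / m ∈ {r : ℝ | ∃ μ : ProbabilityMeasure Λ,
        Measure.map T (μ : Measure Λ) = (μ : Measure Λ) ∧
        r = h μ + (∫ x, φ m x ∂(μ : Measure Λ)) / m} := by
    intro m μ hμ
    exact ⟨μ, hμ, by simp only [ha]⟩
  have hne : ∀ m : ℕ, {r : ℝ | ∃ μ : ProbabilityMeasure Λ,
      Measure.map T (μ : Measure Λ) = (μ : Measure Λ) ∧
      r = h μ + (∫ x, φ m x ∂(μ : Measure Λ)) / m}.Nonempty :=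
    fun m => ⟨_, hmem m μ0 hμ0⟩
  have hadiv : ∀ (μ : ProbabilityMeasure Λ) (m : ℕ), 1 ≤ m → a μ m / m ≤ B m := by
    intro μ m hm
    have hm1 : (1 : ℝ) ≤ m := by exact_mod_cast hm
    have h1 : a μ m ≤ B m := (abs_le.mp (haB μ m)).2
    calc a μ m / m ≤ B m / m := by
          have hm0 : (0 : ℝ) < m := by linarith
          exact div_le_div_of_nonneg_right h1 hm0.le
      _ ≤ B m := div_le_self (hB0 m) hm1
  have hbdd : ∀ m : ℕ, 1 ≤ m → BddAbove {r : ℝ | ∃ μ : ProbabilityMeasure Λ,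
      Measure.map T (μ : Measure Λ) = (μ : Measure Λ) ∧
      r = h μ + (∫ x, φ m x ∂(μ : Measure Λ)) / m} := by
    intro m hm
    refine ⟨Hb + B m, ?_⟩
    rintro r ⟨μ, hμ, rfl⟩
    have h2 : (∫ x, φ m x ∂(μ : Measure Λ)) / m = a μ m / m := by simp only [ha]
    rw [h2]
    exact add_le_add (hHb' μ) (hadiv μ m hm)
  have hPub : ∀ m : ℕ, 1 ≤ m → ∀ (μ : ProbabilityMeasure Λ), Measure.map T ↑μ = ↑μ →
      h μ + a μ m / m ≤ P m := fun m hm μ hμ => le_csSup (hbdd m hm) (hmem m μ hμ)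
  have hPle : ∀ (n m : ℕ), 1 ≤ m → m ≤ n → P n ≤ P m + 3 * Cm m / n := by
    intro n m hm hmn
    refine csSup_le (hne n) ?_
    rintro r ⟨μ, hμ, rfl⟩
    have h2 : (∫ x, φ n x ∂(μ : Measure Λ)) / n = a μ n / n := by simp only [ha]
    rw [h2]
    have := key μ hμ m hm n hmn
    have := hPub m hm μ hμ
    linarith
  -- coboundedness of P
  have hcobdd : Filter.IsCoboundedUnder (· ≤ ·) Filter.atTop P := by
    refine Filter.isCoboundedUnder_le_of_eventually_le Filter.atTop
      (x := h μ0 + (χ μ0 - 1)) ?_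
    have hev1 : ∀ᶠ n : ℕ in Filter.atTop, χ μ0 - 1 < (∫ x, φ n x ∂(μ0 : Measure Λ)) / n :=
      Filter.Tendsto.eventually_const_lt (by linarith) (hχ μ0 hμ0)
    filter_upwards [hev1, Filter.eventually_ge_atTop 1] with n h1 h2
    have h3 := hPub n h2 μ0 hμ0
    have h4 : a μ0 n / n = (∫ x, φ n x ∂(μ0 : Measure Λ)) / n := by simp only [ha]
    rw [h4] at h3
    linarith
  have hlimsupP : ∀ m : ℕ, 1 ≤ m → Filter.limsup P Filter.atTop ≤ P m := by
    intro m hm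
    have hev : ∀ᶠ n : ℕ in Filter.atTop, P n ≤ P m + 3 * Cm m / n := by
      filter_upwards [Filter.eventually_ge_atTop m] with n hn
      exact hPle n m hm hn
    have htb : Filter.Tendsto (fun n : ℕ => P m + 3 * Cm m / n) Filter.atTop
        (nhds (P m + 0)) :=
      tendsto_const_nhds.add (tendsto_const_div_atTop_nhds_zero_nat _)
    calc Filter.limsup P Filter.atTop
        ≤ Filter.limsup (fun n : ℕ => P m + 3 * Cm m / n) Filter.atTop :=
          Filter.limsup_le_limsup hev hcobdd htb.isBoundedUnder_le
      _ = P m + 0 := htb.limsup_eq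
      _ = P m := add_zero _
  -- near-maximizers
  have hmax : ∀ m : ℕ, ∃ μ : ProbabilityMeasure Λ, Measure.map T ↑μ = ↑μ ∧
      (1 ≤ m → P m - 1 / m < h μ + a μ m / m) := by
    intro m
    by_cases hm : 1 ≤ m
    · have hmR : (0 : ℝ) < 1 / m := by
        have : (0:ℝ) < m := by exact_mod_cast hm
        positivity
      obtain ⟨r, ⟨μ, hμ, rfl⟩, hrlt⟩ := exists_lt_of_lt_csSup (hne m)
        (show P m - 1 / (m:ℝ) < P m by linarith)
      refine ⟨μ, hμ, fun _ => ?_⟩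
      have h2 : (∫ x, φ m x ∂(μ : Measure Λ)) / m = a μ m / m := by simp only [ha]
      rw [h2] at hrlt
      exact hrlt
    · exact ⟨μ0, hμ0, fun hc => absurd hc hm⟩
  choose ν hν1 hν2 using hmax
  -- extract weakly convergent subsequence
  obtain ⟨ψ, μI, hψ, hint, htop⟩ := exists_subseq_weak_limit (fun i => ν (i + 1))
  -- the limit is invariant
  have hμIinv : Measure.map T (μI : Measure Λ) = (μI : Measure Λ) := by
    haveI : IsProbabilityMeasure (Measure.map T (μI : Measure Λ)) :=
      Measure.isProbabilityMeasure_map hT.measurable.aemeasurable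
    refine ext_of_forall_lintegral_eq_of_IsFiniteMeasure ?_
    intro f
    set fr : C(Λ, ℝ) := ⟨fun x => (f x : ℝ), NNReal.continuous_coe.comp f.continuous⟩ with hfr
    have heq : ∫ x, ((f (T x)) : ℝ) ∂(μI : Measure Λ) = ∫ x, ((f x) : ℝ) ∂(μI : Measure Λ) := by
      have h1 := hint (fr.comp ⟨T, hT⟩)
      have h2 := hint fr
      refine tendsto_nhds_unique (h1.congr fun i => ?_) h2
      have := hinvint (ν (ψ i + 1)) (hν1 _) 1 fr
      simpa using this
    rw [lintegral_map (f := fun x => ((f x : ℝ≥0∞)))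
      (by exact measurable_coe_nnreal_ennreal.comp f.continuous.measurable) hT.measurable]
    have hi1 : Integrable (fun x => ((f (T x) : ℝ))) (μI : Measure Λ) :=
      cont_integrable (fr.comp ⟨T, hT⟩) _
    have hi2 : Integrable (fun x => ((f x : ℝ))) (μI : Measure Λ) := cont_integrable fr _
    rw [lintegral_coe_eq_integral _ hi1, lintegral_coe_eq_integral _ hi2, heq]
  -- the ε–k argument
  have hklim : ∀ k : ℕ, 1 ≤ k → Filter.limsup P Filter.atTop ≤ h μI + a μI k / k := by
    intro k hk
    refine le_of_forall_pos_le_add fun ε hε => ?_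
    have hε3 : (0:ℝ) < ε / 3 := by linarith
    have T1 : ∀ᶠ i : ℕ in Filter.atTop, h (ν (ψ i + 1)) < h μI + ε / 3 :=
      htop.eventually (hsc μI (h μI + ε / 3) (by linarith))
    have T2 : ∀ᶠ i : ℕ in Filter.atTop,
        a (ν (ψ i + 1)) k / k < a μI k / k + ε / 3 := by
      have h2 := (hint (cφ k)).div_const (k : ℝ)
      have h2' : Filter.Tendsto (fun i => a (ν (ψ i + 1)) k / k) Filter.atTop
          (nhds (a μI k / k)) := h2
      exact Filter.Tendsto.eventually_lt_const (by linarith) h2'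
    have hψtop : Filter.Tendsto (fun i => ψ i + 1) Filter.atTop Filter.atTop :=
      tendsto_atTop_mono (fun i => Nat.le_succ_of_le hψ.le_apply) tendsto_id
    have T3 : ∀ᶠ i : ℕ in Filter.atTop,
        (3 * Cm k + 1) / ((ψ i + 1 : ℕ) : ℝ) < ε / 3 := by
      have h0 : Filter.Tendsto (fun n : ℕ => (3 * Cm k + 1) / (n : ℝ)) Filter.atTop
          (nhds 0) := tendsto_const_div_atTop_nhds_zero_nat _
      exact Filter.Tendsto.eventually_lt_const hε3 (h0.comp hψtop)
    have T4 : ∀ᶠ i : ℕ in Filter.atTop, k ≤ ψ i + 1 := hψtop.eventually_ge_atTop k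
    obtain ⟨i, h1i, h2i, h3i, h4i⟩ := (T1.and (T2.and (T3.and T4))).exists
    set m : ℕ := ψ i + 1 with hmdef
    have hm1 : 1 ≤ m := Nat.succ_le_succ (Nat.zero_le _)
    have hmR : (0 : ℝ) < m := by exact_mod_cast hm1
    have c1 := hlimsupP m hm1
    have c2 := hν2 m hm1
    have c3 := key (ν m) (hν1 m) k hk m h4i
    have e : 3 * Cm k / (m : ℝ) + 1 / m = (3 * Cm k + 1) / m := by rw [add_div]
    have : Filter.limsup P Filter.atTop <
        (h μI + ε / 3) + (a μI k / k + ε / 3) + ε / 3 := by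
      calc Filter.limsup P Filter.atTop ≤ P m := c1
        _ < h (ν m) + a (ν m) m / m + 1 / m := by linarith
        _ ≤ h (ν m) + (a (ν m) k / k + 3 * Cm k / m) + 1 / m := by linarith
        _ < (h μI + ε / 3) + (a μI k / k + ε / 3) + ε / 3 := by linarith
    linarith
  have hfinal : Filter.limsup P Filter.atTop ≤ h μI + χ μI := by
    have ht : Filter.Tendsto (fun k : ℕ => h μI + a μI k / k) Filter.atTop
        (nhds (h μI + χ μI)) := by
      refine tendsto_const_nhds.add ?_
      have := hχ μI hμIinv
      simp only [ha]
      exact this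
    refine ge_of_tendsto ht ?_
    filter_upwards [Filter.eventually_ge_atTop 1] with k hk
    exact hklim k hk
  -- bounding χ and concluding
  have hχle : ∀ μ : ProbabilityMeasure Λ, Measure.map T ↑μ = ↑μ → χ μ ≤ B 1 := by
    intro μ hμ
    have hstep : ∀ k : ℕ, 1 ≤ k → a μ k ≤ k * B 1 := by
      intro k hk
      induction k with
      | zero => omega
      | succ k ih =>
        by_cases hk0 : 1 ≤ k
        · have hs := hsubint μ hμ k 1 hk0 le_rfl
          have h1 : a μ 1 ≤ B 1 := (abs_le.mp (haB μ 1)).2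
          have h2 := ih hk0
          push_cast
          push_cast at h2
          linarith
        · have hk00 : k = 0 := by omega
          subst hk00
          have h1 : a μ 1 ≤ B 1 := (abs_le.mp (haB μ 1)).2
          simpa using h1
    refine le_of_tendsto (hχ μ hμ) ?_
    filter_upwards [Filter.eventually_ge_atTop 1] with k hk
    have hkR : (0 : ℝ) < k := by exact_mod_cast hk
    rw [div_le_iff₀ hkR]
    have := hstep k hk
    simp only [ha] at this
    linarith
  have hRb : BddAbove {r : ℝ | ∃ μ : ProbabilityMeasure Λ,
      Measure.map T (μ : Measure Λ) = (μ : Measure Λ) ∧ r = h μ + χ μ} := by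
    refine ⟨Hb + B 1, ?_⟩
    rintro r ⟨μ, hμ, rfl⟩
    exact add_le_add (hHb' μ) (hχle μ hμ)
  exact le_trans hfinal (le_csSup hRb ⟨μI, hμIinv, rfl⟩)
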